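/- Let P = [a] × [2b] with partial order (x,y) ⪯ (z,t) iff (x,y)=(z,t), or (x<z and y<t), or (y ≤ b and t ≥ b+1 and y < t-b). Any path from (1,b+h) to (a,h) (steps (1,0) or (0,-1)), with 1 ≤ h ≤ b, is an antichain in P. -/

import Mathlib

/-- A step moves one unit down `(1,0)` or one unit left `(0,-1)`. -/
def Step (p q : ℤ × ℤ) : Prop := q = p + (1, 0) ∨ q = p + (0, -1)

/-- `l` is a path starting at `p` and ending at `q`, each consecutive
difference being `(1,0)` or `(0,-1)`. -/
def IsPathFromTo (l : List (ℤ × ℤ)) (p q : ℤ × ℤ) : Prop :=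
  l.Chain' Step ∧ l.head? = some p ∧ l.getLast? = some q

/-- Membership in the poset `P = [a] × [2b]`, viewed inside `ℤ × ℤ`. -/
def memP (a b : ℕ) (p : ℤ × ℤ) : Prop :=
  1 ≤ p.1 ∧ p.1 ≤ (a : ℤ) ∧ 1 ≤ p.2 ∧ p.2 ≤ 2 * (b : ℤ)

/-- The partial order on `P = [a] × [2b]`:
`(x,y) ⪯ (z,t)` iff `(x,y) = (z,t)`, or `x < z` and `y < t`,
or `y ≤ b`, `t ≥ b+1` and `y < t - b`. -/
def ple (b : ℕ) (p q : ℤ × ℤ) : Prop :=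
  p = q ∨ (p.1 < q.1 ∧ p.2 < q.2) ∨
    (p.2 ≤ (b : ℤ) ∧ (b : ℤ) + 1 ≤ q.2 ∧ p.2 < q.2 - (b : ℤ))

/-- The "reachability" relation along a path. -/
def Reach (p q : ℤ × ℤ) : Prop :=
  p.1 ≤ q.1 ∧ q.2 ≤ p.2 ∧ p.1 - p.2 < q.1 - q.2

instance : IsTrans (ℤ × ℤ) Reach := by
  constructor
  rintro p q r ⟨h1, h2, h3⟩ ⟨h4, h5, h6⟩
  exact ⟨h1.trans h4, h5.trans h2, h3.trans h6⟩

lemma step_reach {p q : ℤ × ℤ} (hpq : Step p q) : Reach p q := by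
  rcases hpq with rfl | rfl <;> constructor <;> simp <;> omega

lemma chain'_pairwise {l : List (ℤ × ℤ)} (hl : l.Chain' Step) :
    l.Pairwise Reach :=
  List.isChain_iff_pairwise.mp (hl.imp fun _ _ => step_reach)

lemma head_rel {α : Type*} {R : α → α → Prop} {l : List α} {hd : α}
    (hl : l.Pairwise R) (hh : l.head? = some hd) :
    ∀ p ∈ l, p = hd ∨ R hd p := by
  match l with
  | [] => simp at hh
  | x :: t =>
    simp only [List.head?_cons, Option.some.injEq] at hh
    subst hh
    rw [List.pairwise_cons] at hl
    intro p hp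
    rcases List.mem_cons.mp hp with rfl | hp'
    · exact Or.inl rfl
    · exact Or.inr (hl.1 p hp')

lemma last_reach {l : List (ℤ × ℤ)} {lst : ℤ × ℤ} (hl : l.Pairwise Reach)
    (hh : l.getLast? = some lst) : ∀ p ∈ l, p = lst ∨ Reach p lst := by
  have h1 : l.reverse.Pairwise (flip Reach) := by
    rw [List.pairwise_reverse] at *; exact hl.imp fun h => h
  have h2 : l.reverse.head? = some lst := by
    rw [List.head?_reverse]; exact hh
  intro p hp
  rcases head_rel h1 h2 p (List.mem_reverse.mpr hp) with h | h
  · exact Or.inl h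
  · exact Or.inr h

theorem stmt_8 (a b h : ℕ) (ha : 2 ≤ a) (hab : a ≤ b) (h1 : 1 ≤ h) (h2 : h ≤ b)
    (l : List (ℤ × ℤ))
    (hl : IsPathFromTo l (1, (b : ℤ) + (h : ℤ)) ((a : ℤ), (h : ℤ))) :
    IsAntichain (ple b) {x | x ∈ l} := by
  obtain ⟨hc, hhd, hlst⟩ := hl
  have hpw := chain'_pairwise hc
  -- bounds on second coordinate
  have hub : ∀ p ∈ l, p.2 ≤ (b : ℤ) + h := by
    intro p hp
    rcases head_rel hpw hhd p hp with rfl | ⟨_, h2', _⟩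
    · simp
    · simpa using h2'
  have hlb : ∀ p ∈ l, (h : ℤ) ≤ p.2 := by
    intro p hp
    rcases last_reach hpw hlst p hp with rfl | ⟨_, h2', _⟩
    · simp
    · simpa using h2'
  -- symmetric closure of Reach holds between any two distinct elements
  have hsym : ∀ p ∈ l, ∀ q ∈ l, p ≠ q → Reach p q ∨ Reach q p := by
    have : l.Pairwise (fun p q => Reach p q ∨ Reach q p) :=
      hpw.imp fun h => Or.inl h
    exact fun p hp q hq hpq =>
      have hS : Std.Symm (fun p q : ℤ × ℤ => Reach p q ∨ Reach q p) :=
        ⟨fun x y hxy => Or.symm hxy⟩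
      this.forall hp hq hpq
  intro p hp q hq hpq hple
  simp only [Set.mem_setOf_eq] at hp hq
  have hpu := hub p hp
  have hpl := hlb p hp
  have hqu := hub q hq
  have hql := hlb q hq
  rcases hsym p hp q hq hpq with ⟨hr1, hr2, hr3⟩ | ⟨hr1, hr2, hr3⟩ <;>
    rcases hple with rfl | ⟨e1, e2⟩ | ⟨e1, e2, e3⟩ <;> omega
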